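/- Let κ ∈ ℝ ∖ {0} and define erfc(x) := (2/√π)·∫_x^{∞} e^{−t²} dt. Then on the open set U := {x ∈ ℝ : 2 − κ√π·erfc(x) ≠ 0}, the function q(x) := 2κ·e^{−x²}/(2 − κ√π·erfc(x)) is smooth, nonvanishing, solves PIV(1/2) on U, and satisfies q(x) = κ·e^{−x²}·(1 + O(x^{−2})) as x → +∞. -/

import Mathlib

open Real Filter Set Asymptotics MeasureTheory Topology

noncomputable section

/-- The fourth Painlevé equation PIV(α) at a point `x`:
`q'' = (q')²/(2q) + (3/2)q³ + 4xq² + 2(x²-2α)q`. -/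
def PIVEq (α : ℝ) (q : ℝ → ℝ) (x : ℝ) : Prop :=
  deriv (deriv q) x =
    (deriv q x) ^ 2 / (2 * q x) + (3 / 2) * (q x) ^ 3 + 4 * x * (q x) ^ 2 +
      2 * (x ^ 2 - 2 * α) * q x

/-- The complementary error function `erfc(x) = (2/√π) ∫_x^∞ e^{-t²} dt`. -/
def erfc (x : ℝ) : ℝ := (2 / Real.sqrt π) * ∫ t in Ioi x, Real.exp (-t ^ 2)

lemma gauss_integrable' : Integrable (fun t : ℝ => Real.exp (-t ^ 2)) := by
  have := integrable_exp_neg_mul_sq (by norm_num : (0:ℝ) < 1)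
  simpa using this

lemma ioi_eq' (x : ℝ) : (∫ t in Ioi x, Real.exp (-t ^ 2))
    = Real.sqrt π / 2 - ∫ t in (0:ℝ)..x, Real.exp (-t ^ 2) := by
  have h0 : (∫ t in Ioi (0:ℝ), Real.exp (-t ^ 2)) = Real.sqrt π / 2 := by
    have := integral_gaussian_Ioi 1
    simpa using this
  have htot : (∫ t : ℝ, Real.exp (-t ^ 2)) = Real.sqrt π := by
    have := integral_gaussian 1
    simpa using this
  have hs1 : (∫ t in Iic x, Real.exp (-t ^ 2)) + (∫ t in Ioi x, Real.exp (-t ^ 2))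
      = Real.sqrt π := by
    rw [intervalIntegral.integral_Iic_add_Ioi gauss_integrable'.integrableOn
      gauss_integrable'.integrableOn, htot]
  have hs0 : (∫ t in Iic (0:ℝ), Real.exp (-t ^ 2)) + (∫ t in Ioi (0:ℝ), Real.exp (-t ^ 2))
      = Real.sqrt π := by
    rw [intervalIntegral.integral_Iic_add_Ioi gauss_integrable'.integrableOn
      gauss_integrable'.integrableOn, htot]
  have hsub : (∫ t in Iic x, Real.exp (-t ^ 2)) - (∫ t in Iic (0:ℝ), Real.exp (-t ^ 2))
      = ∫ t in (0:ℝ)..x, Real.exp (-t ^ 2) :=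
    intervalIntegral.integral_Iic_sub_Iic gauss_integrable'.integrableOn
      gauss_integrable'.integrableOn
  linarith [h0, hs1, hs0, hsub]

lemma hasDerivAt_g' (x : ℝ) :
    HasDerivAt (fun y : ℝ => ∫ t in (0:ℝ)..y, Real.exp (-t ^ 2)) (Real.exp (-x ^ 2)) x :=
  intervalIntegral.integral_hasDerivAt_right
    (gauss_integrable'.intervalIntegrable)
    ((Real.continuous_exp.comp (continuous_pow 2).neg).stronglyMeasurableAtFilter _ _)
    ((Real.continuous_exp.comp (continuous_pow 2).neg).continuousAt)

lemma sqrt_pi_pos : 0 < Real.sqrt π := Real.sqrt_pos.mpr Real.pi_pos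

lemma erfc_eq (x : ℝ) :
    erfc x = 1 - (2 / Real.sqrt π) * ∫ t in (0:ℝ)..x, Real.exp (-t ^ 2) := by
  unfold erfc
  rw [ioi_eq' x]
  have h := sqrt_pi_pos.ne'
  field_simp

lemma hasDerivAt_erfc (x : ℝ) :
    HasDerivAt erfc (-(2 / Real.sqrt π) * Real.exp (-x ^ 2)) x := by
  have h : HasDerivAt (fun y : ℝ => 1 - (2 / Real.sqrt π) * ∫ t in (0:ℝ)..y, Real.exp (-t ^ 2))
      (-(2 / Real.sqrt π) * Real.exp (-x ^ 2)) x := by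
    have := ((hasDerivAt_g' x).const_mul (2 / Real.sqrt π)).const_sub 1
    refine this.congr_deriv ?_
    ring
  exact h.congr_of_eventuallyEq (Filter.Eventually.of_forall fun y => erfc_eq y)

lemma contDiff_erfc : ContDiff ℝ (⊤ : ℕ∞) erfc := by
  have hg : ContDiff ℝ (⊤ : ℕ∞) (fun y : ℝ => ∫ t in (0:ℝ)..y, Real.exp (-t ^ 2)) := by
    rw [contDiff_infty_iff_deriv]
    constructor
    · exact fun y => (hasDerivAt_g' y).differentiableAt
    · have : deriv (fun y : ℝ => ∫ t in (0:ℝ)..y, Real.exp (-t ^ 2))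
          = fun y : ℝ => Real.exp (-y ^ 2) := funext fun y => (hasDerivAt_g' y).deriv
      rw [this]
      exact Real.contDiff_exp.comp (contDiff_id.pow 2).neg
  have : erfc = fun x => 1 - (2 / Real.sqrt π) * ∫ t in (0:ℝ)..x, Real.exp (-t ^ 2) :=
    funext erfc_eq
  rw [this]
  exact contDiff_const.sub (contDiff_const.mul hg)

lemma erfc_nonneg (x : ℝ) : 0 ≤ erfc x := by
  unfold erfc
  apply mul_nonneg (by positivity)
  exact setIntegral_nonneg measurableSet_Ioi fun t _ => (Real.exp_pos _).le

lemma erfc_le (x : ℝ) (hx : 1 ≤ x) : erfc x ≤ Real.exp (-x ^ 2) / Real.sqrt π := by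
  have hval : (∫ t in Ioi x, t * Real.exp (-t ^ 2)) = Real.exp (-x ^ 2) / 2 := by
    have hF : ∀ t ∈ Ici x, HasDerivAt (fun t : ℝ => -Real.exp (-t ^ 2) / 2)
        (t * Real.exp (-t ^ 2)) t := by
      intro t _
      have h1 : HasDerivAt (fun t : ℝ => -t ^ 2) (-(2 * t)) t := by
        simpa [Pi.neg_def] using (hasDerivAt_pow 2 t).neg
      have := ((h1.exp).neg.div_const 2)
      refine this.congr_deriv ?_
      ring
    have hint : IntegrableOn (fun t : ℝ => t * Real.exp (-t ^ 2)) (Ioi x) := by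
      have := integrable_mul_exp_neg_mul_sq (by norm_num : (0:ℝ) < 1)
      simpa using this.integrableOn
    have hlim : Tendsto (fun t : ℝ => -Real.exp (-t ^ 2) / 2) atTop (𝓝 0) := by
      have h2 : Tendsto (fun t : ℝ => -t ^ 2) atTop atBot := by
        apply tendsto_neg_atBot_iff.mpr
        exact tendsto_pow_atTop (by norm_num)
      have := (Real.tendsto_exp_atBot.comp h2).neg.div_const 2
      simpa using this
    have := MeasureTheory.integral_Ioi_of_hasDerivAt_of_tendsto' hF hint hlim
    rw [this]
    ring
  have hmono : (∫ t in Ioi x, Real.exp (-t ^ 2)) ≤ ∫ t in Ioi x, t * Real.exp (-t ^ 2) := by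
    apply setIntegral_mono_on gauss_integrable'.integrableOn
    · have := integrable_mul_exp_neg_mul_sq (by norm_num : (0:ℝ) < 1)
      simpa using this.integrableOn
    · exact measurableSet_Ioi
    · intro t ht
      have h1t : 1 ≤ t := le_trans hx (le_of_lt ht)
      nlinarith [Real.exp_pos (-t ^ 2)]
  unfold erfc
  rw [hval] at hmono
  have h := sqrt_pi_pos
  rw [div_mul_eq_mul_div, div_le_div_iff₀ h h]
  nlinarith [Real.exp_pos (-x ^ 2)]

lemma erfc_tendsto : Tendsto erfc atTop (𝓝 0) := by
  have hexp : Tendsto (fun x : ℝ => Real.exp (-x ^ 2) / Real.sqrt π) atTop (𝓝 0) := by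
    have h2 : Tendsto (fun t : ℝ => -t ^ 2) atTop atBot := by
      apply tendsto_neg_atBot_iff.mpr
      exact tendsto_pow_atTop (by norm_num)
    have := (Real.tendsto_exp_atBot.comp h2).div_const (Real.sqrt π)
    simpa using this
  apply squeeze_zero' (Filter.Eventually.of_forall erfc_nonneg) _ hexp
  filter_upwards [eventually_ge_atTop (1:ℝ)] with x hx using erfc_le x hx

theorem piv_explicit_solution_error_function (κ : ℝ) (hκ : κ ≠ 0) :
    IsOpen {x : ℝ | 2 - κ * Real.sqrt π * erfc x ≠ 0} ∧
    ContDiffOn ℝ (⊤ : ℕ∞)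
      (fun x : ℝ => 2 * κ * Real.exp (-x ^ 2) / (2 - κ * Real.sqrt π * erfc x))
      {x : ℝ | 2 - κ * Real.sqrt π * erfc x ≠ 0} ∧
    (∀ x ∈ {x : ℝ | 2 - κ * Real.sqrt π * erfc x ≠ 0},
      2 * κ * Real.exp (-x ^ 2) / (2 - κ * Real.sqrt π * erfc x) ≠ 0) ∧
    (∀ x ∈ {x : ℝ | 2 - κ * Real.sqrt π * erfc x ≠ 0},
      PIVEq (1 / 2)
        (fun x : ℝ => 2 * κ * Real.exp (-x ^ 2) / (2 - κ * Real.sqrt π * erfc x)) x) ∧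
    ∃ E : ℝ → ℝ, (E =O[atTop] fun x : ℝ => x ^ (-2 : ℝ)) ∧
      ∀ᶠ x : ℝ in atTop,
        2 * κ * Real.exp (-x ^ 2) / (2 - κ * Real.sqrt π * erfc x) =
          κ * Real.exp (-x ^ 2) * (1 + E x) := by
  set D : ℝ → ℝ := fun x => 2 - κ * Real.sqrt π * erfc x with hDdef
  set q : ℝ → ℝ := fun x => 2 * κ * Real.exp (-x ^ 2) / (2 - κ * Real.sqrt π * erfc x)
    with hqdef
  set U : Set ℝ := {x : ℝ | 2 - κ * Real.sqrt π * erfc x ≠ 0} with hUdef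
  -- basic facts
  have hexp_cd : ContDiff ℝ (⊤ : ℕ∞) (fun x : ℝ => Real.exp (-x ^ 2)) :=
    Real.contDiff_exp.comp (contDiff_id.pow 2).neg
  have hDcd : ContDiff ℝ (⊤ : ℕ∞) D :=
    contDiff_const.sub (contDiff_const.mul contDiff_erfc)
  have hDcont : Continuous D := hDcd.continuous
  have hUopen : IsOpen U := by
    have : U = D ⁻¹' ({0}ᶜ) := rfl
    rw [this]
    exact isOpen_compl_singleton.preimage hDcont
  have hD' : ∀ x : ℝ, HasDerivAt D (2 * κ * Real.exp (-x ^ 2)) x := by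
    intro x
    have := ((hasDerivAt_erfc x).const_mul (κ * Real.sqrt π)).const_sub 2
    refine this.congr_deriv ?_
    have h := sqrt_pi_pos.ne'
    field_simp
  have hqder : ∀ x : ℝ, x ∈ U →
      HasDerivAt q (-2 * x * q x - (q x) ^ 2) x := by
    intro x hx
    have hxD : D x ≠ 0 := hx
    have hN : HasDerivAt (fun y : ℝ => 2 * κ * Real.exp (-y ^ 2))
        (2 * κ * (Real.exp (-x ^ 2) * -(2 * x))) x := by
      have h1 : HasDerivAt (fun y : ℝ => -y ^ 2) (-(2 * x)) x := by
        simpa [Pi.neg_def] using (hasDerivAt_pow 2 x).neg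
      exact (h1.exp).const_mul (2 * κ)
    have := hN.div (hD' x) hxD
    refine this.congr_deriv ?_
    simp only [hqdef, hDdef]
    field_simp
  refine ⟨hUopen, ?_, ?_, ?_, ?_⟩
  · -- smoothness
    exact ContDiffOn.div ((contDiff_const.mul hexp_cd).contDiffOn) hDcd.contDiffOn
      (fun x hx => hx)
  · -- nonvanishing
    intro x hx
    exact div_ne_zero (by positivity) hx
  · -- PIV equation
    intro x hx
    have hxD : D x ≠ 0 := hx
    have hqx : q x ≠ 0 := div_ne_zero (by positivity) hxD
    have P := hqder x hx
    have hev : deriv q =ᶠ[𝓝 x] fun y => -2 * y * q y - (q y) ^ 2 := by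
      filter_upwards [hUopen.mem_nhds hx] with y hy using (hqder y hy).deriv
    have hP2 : HasDerivAt (fun y => -2 * y * q y - (q y) ^ 2)
        ((-2) * q x + (-2 * x) * (-2 * x * q x - (q x) ^ 2)
          - 2 * q x ^ 1 * (-2 * x * q x - (q x) ^ 2)) x := by
      have h1 : HasDerivAt (fun y : ℝ => -2 * y) (-2) x := by
        simpa using (hasDerivAt_id x).const_mul (-2 : ℝ)
      exact (h1.mul P).sub (P.pow 2)
    have hdd : deriv (deriv q) x =
        (-2) * q x + (-2 * x) * (-2 * x * q x - (q x) ^ 2)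
          - 2 * q x ^ 1 * (-2 * x * q x - (q x) ^ 2) := by
      rw [hev.deriv_eq]
      exact hP2.deriv
    show PIVEq (1/2) q x
    unfold PIVEq
    rw [hdd, P.deriv]
    field_simp
    ring
  · -- asymptotics
    refine ⟨fun x => κ * Real.sqrt π * erfc x / (2 - κ * Real.sqrt π * erfc x), ?_, ?_⟩
    · have hDlim : Tendsto D atTop (𝓝 2) := by
        have := (erfc_tendsto.const_mul (κ * Real.sqrt π)).const_sub 2
        simpa using this
      have hD1 : ∀ᶠ x in atTop, (1:ℝ) ≤ D x :=
        hDlim.eventually (eventually_ge_nhds (by norm_num))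
      rw [isBigO_iff]
      refine ⟨|κ|, ?_⟩
      filter_upwards [eventually_ge_atTop (1:ℝ), hD1] with x hx1 hxD
      have hx0 : (0:ℝ) < x := lt_of_lt_of_le one_pos hx1
      have hDpos : (0:ℝ) < D x := lt_of_lt_of_le one_pos hxD
      have hrpow : x ^ (-2 : ℝ) = (x ^ 2)⁻¹ := by
        rw [show (-2:ℝ) = -((2:ℕ):ℝ) by norm_num, Real.rpow_neg hx0.le, Real.rpow_natCast]
      have herfc := erfc_le x hx1
      have hnum : |κ * Real.sqrt π * erfc x| ≤ |κ| * Real.exp (-x ^ 2) := by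
        rw [abs_mul, abs_mul, abs_of_nonneg (erfc_nonneg x),
          abs_of_nonneg sqrt_pi_pos.le]
        calc |κ| * Real.sqrt π * erfc x
            ≤ |κ| * Real.sqrt π * (Real.exp (-x ^ 2) / Real.sqrt π) := by
              apply mul_le_mul_of_nonneg_left herfc (by positivity)
          _ = |κ| * Real.exp (-x ^ 2) := by
              field_simp
      have hexp_le : Real.exp (-x ^ 2) ≤ (x ^ 2)⁻¹ := by
        rw [Real.exp_neg]
        apply inv_anti₀ (by positivity)
        nlinarith [Real.add_one_le_exp (x ^ 2)]
      have habs : |κ * Real.sqrt π * erfc x / D x| ≤ |κ| * (x ^ 2)⁻¹ := by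
        rw [abs_div, abs_of_pos hDpos]
        calc |κ * Real.sqrt π * erfc x| / D x ≤ |κ * Real.sqrt π * erfc x| :=
              div_le_self (abs_nonneg _) hxD
          _ ≤ |κ| * Real.exp (-x ^ 2) := hnum
          _ ≤ |κ| * (x ^ 2)⁻¹ := by
              apply mul_le_mul_of_nonneg_left hexp_le (abs_nonneg κ)
      calc ‖κ * Real.sqrt π * erfc x / (2 - κ * Real.sqrt π * erfc x)‖
          = |κ * Real.sqrt π * erfc x / D x| := rfl
        _ ≤ |κ| * (x ^ 2)⁻¹ := habs
        _ = |κ| * ‖x ^ (-2:ℝ)‖ := by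
            rw [hrpow, Real.norm_eq_abs, abs_of_nonneg (inv_nonneg.mpr (sq_nonneg x))]
    · have hDlim : Tendsto D atTop (𝓝 2) := by
        have := (erfc_tendsto.const_mul (κ * Real.sqrt π)).const_sub 2
        simpa using this
      have hD1 : ∀ᶠ x in atTop, (1:ℝ) ≤ D x :=
        hDlim.eventually (eventually_ge_nhds (by norm_num))
      filter_upwards [hD1] with x hxD
      have hDne : (2 - κ * Real.sqrt π * erfc x) ≠ 0 := by
        intro h
        simp only [hDdef] at hxD
        rw [h] at hxD
        norm_num at hxD
      field_simp
      ring
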